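/- Let T > 0, let α ∈ (0,1) and ε ∈ (0, 1−α). Let (X_t)_{t∈[0,T]} be a jointly measurable real-valued stochastic process on a probability space (Ω,F,P) whose sample paths are almost surely (α+ε)-Hölder continuous on [0,T], and which satisfies the bounded-density assumption with some nonnegative g ∈ L¹([0,T]). Let f : ℝ → ℝ be of locally bounded variation. Then almost surely ∫₀^T |f(X_s)| s^{−α} ds < ∞ and ∫₀^T ∫₀^t |f(X_t) − f(X_s)| (t−s)^{−1−α} ds dt < ∞; that is, almost surely the path t ↦ f(X_t) has finite fractional Besov norm ‖f(X_·)‖_{2,α} < ∞. -/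

import Mathlib

open MeasureTheory Set
open scoped ENNReal

noncomputable section

/-- `x` is `α`-Hölder continuous on `[0,T]`. -/
def HolderOnIcc (α T : ℝ) (x : ℝ → ℝ) : Prop :=
  ∃ C : ℝ, ∀ s ∈ Set.Icc (0:ℝ) T, ∀ t ∈ Set.Icc (0:ℝ) T, |x t - x s| ≤ C * |t - s| ^ α

/-- The bounded-density assumption: for a.e. `t ∈ [0,T]`, the law of `X_t` is bounded above by
`g t` times Lebesgue measure. -/
def BoundedDensityAssumption {Ω : Type*} [MeasurableSpace Ω] (P : Measure Ω)
    (T : ℝ) (X : ℝ → Ω → ℝ) (g : ℝ → ℝ) : Prop :=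
  ∀ᵐ t ∂(volume.restrict (Set.Icc (0:ℝ) T)),
    ∀ A : Set ℝ, MeasurableSet A → P {ω | X t ω ∈ A} ≤ ENNReal.ofReal (g t) * volume A

/- ### Auxiliary lemmas -/

/-- Explicit lintegral of a power function on `Ioi r`. -/
lemma besov_aux_lint_Ioi {q r : ℝ} (hq : q < -1) (hr : 0 < r) :
    ∫⁻ u in Set.Ioi r, ENNReal.ofReal (u ^ q) = ENNReal.ofReal (r ^ (q + 1) / (-(q + 1))) := by
  have hi : IntegrableOn (fun u : ℝ => u ^ q) (Set.Ioi r) := integrableOn_Ioi_rpow_of_lt hq hr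
  have hnn : 0 ≤ᵐ[volume.restrict (Set.Ioi r)] fun u : ℝ => u ^ q := by
    filter_upwards [ae_restrict_mem measurableSet_Ioi] with u hu
    exact Real.rpow_nonneg (le_of_lt (hr.trans hu)) _
  rw [← ofReal_integral_eq_lintegral_ofReal hi hnn, integral_Ioi_rpow_of_lt hq hr]
  congr 1
  rw [div_neg, neg_div]

/-- Finiteness of the lintegral of `x ^ (-γ)` on `Ioc 0 1` for `γ < 1`. -/
lemma besov_aux_Ioc {γ : ℝ} (hγ1 : γ < 1) :
    ∫⁻ x in Set.Ioc (0:ℝ) 1, ENNReal.ofReal (x ^ (-γ)) < ⊤ := by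
  have h : IntegrableOn (fun x : ℝ => x ^ (-γ)) (Set.Ioc (0:ℝ) 1) := by
    have h0 := intervalIntegral.intervalIntegrable_rpow' (a := 0) (b := 1) (r := -γ)
      (by linarith)
    rwa [intervalIntegrable_iff_integrableOn_Ioc_of_le zero_le_one] at h0
  exact h.lintegral_lt_top

/-- Finiteness of the lintegral of `|x| ^ (-γ)` on `Icc (-1) 1` for `0 < γ < 1`. -/
lemma besov_aux_B0 {γ : ℝ} (hγ0 : 0 < γ) (hγ1 : γ < 1) :
    ∫⁻ x in Set.Icc (-1:ℝ) 1, ENNReal.ofReal |x| ^ (-γ) < ⊤ := by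
  have hIcc01 : ∫⁻ x in Set.Icc (0:ℝ) 1, ENNReal.ofReal |x| ^ (-γ) < ⊤ := by
    have he : ∫⁻ x in Set.Icc (0:ℝ) 1, ENNReal.ofReal |x| ^ (-γ)
        = ∫⁻ x in Set.Ioc (0:ℝ) 1, ENNReal.ofReal |x| ^ (-γ) :=
      (setLIntegral_congr (Ioc_ae_eq_Icc (μ := volume) (a := (0:ℝ)) (b := 1))).symm
    rw [he]
    have he2 : ∫⁻ x in Set.Ioc (0:ℝ) 1, ENNReal.ofReal |x| ^ (-γ)
        = ∫⁻ x in Set.Ioc (0:ℝ) 1, ENNReal.ofReal (x ^ (-γ)) := by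
      apply setLIntegral_congr_fun measurableSet_Ioc
      intro x hx; dsimp only
      rw [abs_of_pos hx.1, ENNReal.ofReal_rpow_of_pos hx.1]
    rw [he2]
    exact besov_aux_Ioc hγ1
  have hneg : ∫⁻ x in Set.Icc (-1:ℝ) 0, ENNReal.ofReal |x| ^ (-γ)
      = ∫⁻ x in Set.Icc (0:ℝ) 1, ENNReal.ofReal |x| ^ (-γ) := by
    have hmp : MeasurePreserving (fun v : ℝ => -v) volume volume :=
      Measure.measurePreserving_neg volume
    have hemb : MeasurableEmbedding (fun v : ℝ => -v) :=
      (Homeomorph.neg ℝ).measurableEmbedding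
    have h := hmp.setLIntegral_comp_preimage_emb hemb
      (fun x => ENNReal.ofReal |x| ^ (-γ)) (Set.Icc (0:ℝ) 1)
    have hpre : (fun v : ℝ => -v) ⁻¹' Set.Icc (0:ℝ) 1 = Set.Icc (-1:ℝ) 0 := by
      ext v; simp only [mem_preimage, mem_Icc]; constructor <;> intro hv <;>
        exact ⟨by linarith [hv.1, hv.2], by linarith [hv.1, hv.2]⟩
    rw [hpre] at h
    rw [← h]
    congr 1
    ext v
    rw [abs_neg]
  calc ∫⁻ x in Set.Icc (-1:ℝ) 1, ENNReal.ofReal |x| ^ (-γ)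
      ≤ ∫⁻ x in Set.Icc (-1:ℝ) 0 ∪ Set.Icc (0:ℝ) 1, ENNReal.ofReal |x| ^ (-γ) := by
        apply lintegral_mono_set
        intro x hx
        rcases le_total x 0 with h | h
        · exact Or.inl ⟨hx.1, h⟩
        · exact Or.inr ⟨h, hx.2⟩
    _ ≤ (∫⁻ x in Set.Icc (-1:ℝ) 0, ENNReal.ofReal |x| ^ (-γ))
        + ∫⁻ x in Set.Icc (0:ℝ) 1, ENNReal.ofReal |x| ^ (-γ) := lintegral_union_le _ _ _
    _ < ⊤ := by
        rw [hneg]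
        exact ENNReal.add_lt_top.2 ⟨hIcc01, hIcc01⟩

/-- A function of locally bounded variation is controlled by a Stieltjes-type measure:
`|f b - f a| ≤ μ (Icc a b)` with `μ` finite on compacts. -/
lemma besov_exists_stieltjes_bound {f : ℝ → ℝ} (hf : LocallyBoundedVariationOn f Set.univ) :
    ∃ μ : Measure ℝ, (∀ a b : ℝ, μ (Set.Icc a b) < ⊤) ∧
      (∀ a b : ℝ, a ≤ b → ENNReal.ofReal |f b - f a| ≤ μ (Set.Icc a b)) := by
  set V : ℝ → ℝ := variationOnFromTo f Set.univ 0 with hVdef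
  have hV : Monotone V :=
    monotoneOn_univ.1 (variationOnFromTo.monotoneOn hf (mem_univ 0))
  set F := hV.stieltjesFunction with hFdef
  refine ⟨F.measure, fun a b => ?_, fun a b hab => ?_⟩
  · rw [StieltjesFunction.measure_Icc]
    exact ENNReal.ofReal_lt_top
  · have h1 : |f b - f a| ≤ V b - V a := by
      have h2 : |f b - f a| ≤ variationOnFromTo f Set.univ a b := by
        rw [variationOnFromTo.eq_of_le f Set.univ hab]
        calc |f b - f a| = dist (f a) (f b) := by rw [dist_comm, Real.dist_eq]
          _ ≤ (eVariationOn f (Set.univ ∩ Set.Icc a b)).toReal := by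
              rw [dist_edist]
              exact ENNReal.toReal_mono (hf a b (mem_univ a) (mem_univ b))
                (eVariationOn.edist_le f ⟨mem_univ a, le_rfl, hab⟩ ⟨mem_univ b, hab, le_rfl⟩)
      have h3 : V a + variationOnFromTo f Set.univ a b = V b :=
        variationOnFromTo.add hf (mem_univ 0) (mem_univ a) (mem_univ b)
      linarith
    have h4 : V b ≤ F b := hV.le_rightLim le_rfl
    have h5 : Function.leftLim F a ≤ V a := by
      refine le_of_tendsto (F.mono.tendsto_leftLim a) ?_
      filter_upwards [self_mem_nhdsWithin] with c hc
      exact hV.rightLim_le hc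
    rw [StieltjesFunction.measure_Icc]
    exact ENNReal.ofReal_le_ofReal (by linarith)

/-- The key estimate for the inner time integral. -/
lemma besov_inner_bound {α ε C' : ℝ} (hα : 0 < α) (hε : 0 < ε) (hC' : 1 ≤ C') (t a : ℝ)
    (ha : 0 ≤ a) :
    ∫⁻ s in Set.Ioo (0:ℝ) t,
        (if a ≤ C' * (t - s) ^ (α + ε) then ENNReal.ofReal ((t - s) ^ (-(1 + α))) else 0)
      ≤ ENNReal.ofReal (C' ^ (α / (α + ε)) / α) * ENNReal.ofReal a ^ (-(α / (α + ε))) := by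
  have hαε : 0 < α + ε := by linarith
  have hC'0 : (0:ℝ) < C' := lt_of_lt_of_le one_pos hC'
  have hγ0 : 0 < α / (α + ε) := div_pos hα hαε
  rcases eq_or_lt_of_le ha with h | ha0
  · -- a = 0 : the right hand side is infinite
    have h0 : ENNReal.ofReal a = 0 := by rw [← h]; simp
    rw [h0, ENNReal.zero_rpow_of_neg (by linarith), ENNReal.mul_top
      (ne_of_gt (ENNReal.ofReal_pos.2 (by positivity)))]
    exact le_top
  · set r : ℝ := (a / C') ^ (α + ε)⁻¹ with hrdef
    have hr0 : 0 < r := Real.rpow_pos_of_pos (div_pos ha0 hC'0) _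
    have hmeas : Measurable fun s : ℝ =>
        (Set.Ici r).indicator (fun u => ENNReal.ofReal (u ^ (-(1 + α)))) (t - s) := by
      apply Measurable.comp (g := (Set.Ici r).indicator fun u => ENNReal.ofReal (u ^ (-(1 + α))))
      · exact Measurable.indicator (by fun_prop) measurableSet_Ici
      · fun_prop
    calc ∫⁻ s in Set.Ioo (0:ℝ) t,
          (if a ≤ C' * (t - s) ^ (α + ε) then ENNReal.ofReal ((t - s) ^ (-(1 + α))) else 0)
        ≤ ∫⁻ s in Set.Ioo (0:ℝ) t,
            (Set.Ici r).indicator (fun u => ENNReal.ofReal (u ^ (-(1 + α)))) (t - s) := by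
          apply setLIntegral_mono hmeas
          intro s hs
          split_ifs with hcond
          · have hts : 0 < t - s := sub_pos.2 hs.2
            have h1 : a / C' ≤ (t - s) ^ (α + ε) := (div_le_iff₀ hC'0).2 (by linarith)
            have h2 : r ≤ t - s := by
              have h3 := Real.rpow_le_rpow (div_nonneg ha0.le hC'0.le) h1
                (inv_nonneg.2 hαε.le)
              rwa [← Real.rpow_mul hts.le, mul_inv_cancel₀ hαε.ne', Real.rpow_one] at h3
            exact le_of_eq (Set.indicator_of_mem (Set.mem_Ici.2 h2)
              (fun u => ENNReal.ofReal (u ^ (-(1 + α))))).symm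
          · exact zero_le
      _ ≤ ∫⁻ s, (Set.Ici r).indicator (fun u => ENNReal.ofReal (u ^ (-(1 + α)))) (t - s) :=
          setLIntegral_le_lintegral _ _
      _ = ∫⁻ u, (Set.Ici r).indicator (fun u => ENNReal.ofReal (u ^ (-(1 + α)))) u :=
          (Measure.measurePreserving_sub_left volume t).lintegral_comp
            (Measurable.indicator (by fun_prop) measurableSet_Ici)
      _ = ∫⁻ u in Set.Ici r, ENNReal.ofReal (u ^ (-(1 + α))) :=
          lintegral_indicator measurableSet_Ici _
      _ = ∫⁻ u in Set.Ioi r, ENNReal.ofReal (u ^ (-(1 + α))) :=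
          (setLIntegral_congr (Ioi_ae_eq_Ici (μ := volume) (a := r))).symm
      _ = ENNReal.ofReal (r ^ (-α) / α) := by
          rw [besov_aux_lint_Ioi (by linarith : -(1 + α) < -1) hr0]
          norm_num
      _ = ENNReal.ofReal (C' ^ (α / (α + ε)) / α) * ENNReal.ofReal a ^ (-(α / (α + ε))) := by
          have hrα : r ^ (-α) = C' ^ (α / (α + ε)) * a ^ (-(α / (α + ε))) := by
            rw [hrdef, ← Real.rpow_mul (div_nonneg ha0.le hC'0.le)]
            have he : (α + ε)⁻¹ * -α = -(α / (α + ε)) := by field_simp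
            rw [he, Real.div_rpow ha0.le hC'0.le, Real.rpow_neg hC'0.le (α / (α + ε)),
              div_eq_mul_inv, inv_inv, mul_comm]
          rw [hrα, ENNReal.ofReal_rpow_of_pos ha0,
            ← ENNReal.ofReal_mul (by positivity)]
          congr 1
          ring

/-- Expectation bound under the density assumption. -/
lemma besov_expectation_bound {Ω : Type*} [MeasurableSpace Ω] (P : Measure Ω)
    [IsProbabilityMeasure P] {γ : ℝ} (hγ0 : 0 < γ) (Y : Ω → ℝ) (hY : Measurable Y) (c : ℝ)
    (hd : ∀ A : Set ℝ, MeasurableSet A → P {ω | Y ω ∈ A} ≤ ENNReal.ofReal c * volume A)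
    (y : ℝ) :
    ∫⁻ ω, ENNReal.ofReal |Y ω - y| ^ (-γ) ∂P
      ≤ 1 + ENNReal.ofReal c * ∫⁻ v in Set.Icc (-1:ℝ) 1, ENNReal.ofReal |v| ^ (-γ) := by
  set h : ℝ → ℝ≥0∞ := fun v => ENNReal.ofReal |v - y| ^ (-γ) with hhdef
  have hhm : Measurable h := by fun_prop
  have hmap : ∫⁻ ω, h (Y ω) ∂P = ∫⁻ v, h v ∂(P.map Y) := (lintegral_map hhm hY).symm
  have hle : P.map Y ≤ ENNReal.ofReal c • volume := by
    refine Measure.le_iff.2 fun A hA => ?_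
    rw [Measure.map_apply hY hA]
    exact hd A hA
  have hsplit : ∀ v, h v ≤ (Set.Icc (y - 1) (y + 1)).indicator h v + 1 := by
    intro v
    by_cases hv : v ∈ Set.Icc (y - 1) (y + 1)
    · rw [indicator_of_mem hv]; exact le_self_add
    · rw [indicator_of_notMem hv, zero_add]
      have h1 : 1 ≤ |v - y| := by
        rw [mem_Icc, not_and_or] at hv
        rcases hv with hv | hv
        · rw [le_abs]; right; linarith [not_le.1 hv]
        · rw [le_abs]; left; linarith [not_le.1 hv]
      have hb : 1 ≤ ENNReal.ofReal |v - y| := by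
        rw [ENNReal.one_le_ofReal]; exact h1
      calc h v ≤ ENNReal.ofReal |v - y| ^ (0:ℝ) :=
            ENNReal.rpow_le_rpow_of_exponent_le hb (by linarith)
        _ = 1 := ENNReal.rpow_zero
  have htrans : ∫⁻ v in Set.Icc (y - 1) (y + 1), h v
      = ∫⁻ v in Set.Icc (-1:ℝ) 1, ENNReal.ofReal |v| ^ (-γ) := by
    have hmp : MeasurePreserving (fun v : ℝ => v + y) volume volume :=
      measurePreserving_add_right volume y
    have hemb : MeasurableEmbedding (fun v : ℝ => v + y) :=
      (Homeomorph.addRight y).measurableEmbedding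
    have h0 := hmp.setLIntegral_comp_preimage_emb hemb h (Set.Icc (y - 1) (y + 1))
    have hpre : (fun v : ℝ => v + y) ⁻¹' Set.Icc (y - 1) (y + 1) = Set.Icc (-1:ℝ) 1 := by
      ext v; simp only [mem_preimage, mem_Icc]; constructor <;> intro hv <;>
        exact ⟨by linarith [hv.1, hv.2], by linarith [hv.1, hv.2]⟩
    rw [hpre] at h0
    rw [← h0]
    congr 1
    ext v
    rw [hhdef]
    simp [add_sub_cancel_right]
  have hPmap : IsProbabilityMeasure (P.map Y) := Measure.isProbabilityMeasure_map hY.aemeasurable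
  calc ∫⁻ ω, h (Y ω) ∂P = ∫⁻ v, h v ∂(P.map Y) := hmap
    _ ≤ ∫⁻ v, ((Set.Icc (y - 1) (y + 1)).indicator h v + 1) ∂(P.map Y) :=
        lintegral_mono hsplit
    _ = (∫⁻ v, (Set.Icc (y - 1) (y + 1)).indicator h v ∂(P.map Y)) + 1 := by
        rw [lintegral_add_right _ measurable_const, lintegral_one, measure_univ]
    _ ≤ ENNReal.ofReal c * (∫⁻ v in Set.Icc (y - 1) (y + 1), h v) + 1 := by
        gcongr
        calc ∫⁻ v, (Set.Icc (y - 1) (y + 1)).indicator h v ∂(P.map Y)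
            ≤ ∫⁻ v, (Set.Icc (y - 1) (y + 1)).indicator h v ∂(ENNReal.ofReal c • volume) :=
              lintegral_mono' hle le_rfl
          _ = ENNReal.ofReal c * ∫⁻ v, (Set.Icc (y - 1) (y + 1)).indicator h v ∂volume := by
              rw [lintegral_smul_measure, smul_eq_mul]
          _ = ENNReal.ofReal c * ∫⁻ v in Set.Icc (y - 1) (y + 1), h v := by
              rw [lintegral_indicator measurableSet_Icc]
    _ = 1 + ENNReal.ofReal c * ∫⁻ v in Set.Icc (-1:ℝ) 1, ENNReal.ofReal |v| ^ (-γ) := by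
        rw [htrans, add_comm]

/-- if `X` has a.s. `(α+ε)`-Hölder paths on `[0,T]`, satisfies the bounded-density
assumption with a nonnegative `g ∈ L¹([0,T])`, and `f` is of locally bounded variation, then
almost surely the path `t ↦ f(X_t)` has finite fractional Besov norm `‖f(X_·)‖_{2,α}`. -/
theorem besov_norm_finite
    {Ω : Type*} [MeasurableSpace Ω] (P : Measure Ω) [IsProbabilityMeasure P]
    (T α ε : ℝ) (hT : 0 < T) (hα : α ∈ Set.Ioo (0:ℝ) 1) (hε : ε ∈ Set.Ioo (0:ℝ) (1 - α))
    (X : ℝ → Ω → ℝ) (hX : Measurable (Function.uncurry X))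
    (hXHolder : ∀ᵐ ω ∂P, HolderOnIcc (α + ε) T (fun t => X t ω))
    (g : ℝ → ℝ) (hg0 : ∀ t, 0 ≤ g t) (hgL1 : IntegrableOn g (Set.Icc 0 T))
    (hdens : BoundedDensityAssumption P T X g)
    (f : ℝ → ℝ) (hf : LocallyBoundedVariationOn f Set.univ) :
    ∀ᵐ ω ∂P,
      (∫⁻ s in Set.Ioo (0:ℝ) T, ENNReal.ofReal (|f (X s ω)| * s ^ (-α))) < ⊤ ∧
      (∫⁻ t in Set.Ioo (0:ℝ) T, ∫⁻ s in Set.Ioo (0:ℝ) t,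
        ENNReal.ofReal (|f (X t ω) - f (X s ω)| * (t - s) ^ (-(1 + α)))) < ⊤ := by
  obtain ⟨hα0, hα1⟩ := hα
  obtain ⟨hε0, hε1⟩ := hε
  have hαε : 0 < α + ε := by linarith
  set γ : ℝ := α / (α + ε) with hγdef
  have hγ0 : 0 < γ := div_pos hα0 hαε
  have hγ1 : γ < 1 := (div_lt_one hαε).2 (by linarith)
  obtain ⟨μ, hμfin, hμbound⟩ := besov_exists_stieltjes_bound hf
  have hXpath : ∀ ω, Measurable fun t => X t ω := fun ω =>
    hX.comp (measurable_id.prodMk measurable_const)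
  have hXt : ∀ t, Measurable fun ω => X t ω := fun t =>
    hX.comp (measurable_const.prodMk measurable_id)
  set B0 : ℝ≥0∞ := ∫⁻ v in Set.Icc (-1:ℝ) 1, ENNReal.ofReal |v| ^ (-γ) with hB0def
  have hB0 : B0 < ⊤ := besov_aux_B0 hγ0 hγ1
  -- Step 1: the random quantity Z N is a.s. finite for all N
  have key1 : ∀ N : ℕ, ∀ᵐ ω ∂P,
      (∫⁻ t in Set.Ioo (0:ℝ) T, ∫⁻ y in Set.Icc (-(N:ℝ)) N,
        ENNReal.ofReal |X t ω - y| ^ (-γ) ∂μ) < ⊤ := by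
    intro N
    set IccN : Set ℝ := Set.Icc (-(N:ℝ)) N with hIccN
    have hμN : μ IccN < ⊤ := hμfin _ _
    haveI : IsFiniteMeasure (μ.restrict IccN) :=
      ⟨by rw [Measure.restrict_apply_univ]; exact hμN⟩
    have hinner_m : Measurable (Function.uncurry fun (ω : Ω) (t : ℝ) =>
        ∫⁻ y in IccN, ENNReal.ofReal |X t ω - y| ^ (-γ) ∂μ) := by
      apply Measurable.lintegral_prod_right
      have h0 : Measurable fun p : (Ω × ℝ) × ℝ => X p.1.2 p.1.1 :=
        hX.comp (measurable_fst.snd.prodMk measurable_fst.fst)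
      fun_prop
    have hZm : Measurable fun ω =>
        ∫⁻ t in Set.Ioo (0:ℝ) T, ∫⁻ y in IccN, ENNReal.ofReal |X t ω - y| ^ (-γ) ∂μ := by
      exact Measurable.lintegral_prod_right (f := fun (ω : Ω) (t : ℝ) =>
        ∫⁻ y in IccN, ENNReal.ofReal |X t ω - y| ^ (-γ) ∂μ) hinner_m
    apply ae_lt_top hZm
    have hswap1 : (∫⁻ ω, (∫⁻ t in Set.Ioo (0:ℝ) T,
          ∫⁻ y in IccN, ENNReal.ofReal |X t ω - y| ^ (-γ) ∂μ) ∂P)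
        = ∫⁻ t in Set.Ioo (0:ℝ) T,
            (∫⁻ ω, (∫⁻ y in IccN, ENNReal.ofReal |X t ω - y| ^ (-γ) ∂μ) ∂P) :=
      lintegral_lintegral_swap hinner_m.aemeasurable
    have hswap2 : ∀ t : ℝ, (∫⁻ ω, (∫⁻ y in IccN, ENNReal.ofReal |X t ω - y| ^ (-γ) ∂μ) ∂P)
        = ∫⁻ y in IccN, (∫⁻ ω, ENNReal.ofReal |X t ω - y| ^ (-γ) ∂P) ∂μ := by
      intro t
      apply lintegral_lintegral_swap
      have h0 : Measurable fun p : Ω × ℝ => X t p.1 :=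
        hX.comp (measurable_const.prodMk measurable_fst)
      fun_prop
    have hae : ∀ᵐ t ∂(volume.restrict (Set.Ioo (0:ℝ) T)),
        ∀ A : Set ℝ, MeasurableSet A → P {ω | X t ω ∈ A} ≤ ENNReal.ofReal (g t) * volume A :=
      ae_restrict_of_ae_restrict_of_subset Ioo_subset_Icc_self hdens
    have hbound : ∀ᵐ t ∂(volume.restrict (Set.Ioo (0:ℝ) T)),
        (∫⁻ ω, (∫⁻ y in IccN, ENNReal.ofReal |X t ω - y| ^ (-γ) ∂μ) ∂P)
          ≤ μ IccN * (1 + ENNReal.ofReal (g t) * B0) := by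
      filter_upwards [hae] with t ht
      rw [hswap2 t]
      calc ∫⁻ y in IccN, (∫⁻ ω, ENNReal.ofReal |X t ω - y| ^ (-γ) ∂P) ∂μ
          ≤ ∫⁻ _ in IccN, (1 + ENNReal.ofReal (g t) * B0) ∂μ := by
            apply setLIntegral_mono measurable_const
            intro y _
            exact besov_expectation_bound P hγ0 (fun ω => X t ω) (hXt t) (g t) ht y
        _ = μ IccN * (1 + ENNReal.ofReal (g t) * B0) := by
            rw [setLIntegral_const]
            ring
    rw [hswap1]
    have hg_lint : ∫⁻ t in Set.Ioo (0:ℝ) T, ENNReal.ofReal (g t) < ⊤ := by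
      have h1 : IntegrableOn g (Set.Ioo (0:ℝ) T) := hgL1.mono_set Ioo_subset_Icc_self
      exact h1.lintegral_lt_top
    have hfin : ∫⁻ t in Set.Ioo (0:ℝ) T, μ IccN * (1 + ENNReal.ofReal (g t) * B0) < ⊤ := by
      rw [lintegral_const_mul' _ _ hμN.ne]
      apply ENNReal.mul_lt_top hμN
      have h2 : ∫⁻ t in Set.Ioo (0:ℝ) T, (1 + ENNReal.ofReal (g t) * B0)
          = volume (Set.Ioo (0:ℝ) T) + (∫⁻ t in Set.Ioo (0:ℝ) T, ENNReal.ofReal (g t)) * B0 := by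
        rw [lintegral_add_left measurable_const, lintegral_mul_const' _ _ hB0.ne,
          lintegral_one, Measure.restrict_apply_univ]
      rw [h2]
      apply ENNReal.add_lt_top.2
      refine ⟨?_, ENNReal.mul_lt_top hg_lint hB0⟩
      rw [Real.volume_Ioo]
      exact ENNReal.ofReal_lt_top
    exact (lt_of_le_of_lt (lintegral_mono_ae hbound) hfin).ne
  have key1' : ∀ᵐ ω ∂P, ∀ N : ℕ,
      (∫⁻ t in Set.Ioo (0:ℝ) T, ∫⁻ y in Set.Icc (-(N:ℝ)) N,
        ENNReal.ofReal |X t ω - y| ^ (-γ) ∂μ) < ⊤ := ae_all_iff.2 key1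
  -- Step 2: deterministic conclusion on the good event
  filter_upwards [hXHolder, key1'] with ω hHolder hZ
  obtain ⟨C, hC⟩ := hHolder
  set C' : ℝ := max C 1 with hC'def
  have hC'1 : 1 ≤ C' := le_max_right _ _
  have hC'0 : (0:ℝ) < C' := lt_of_lt_of_le one_pos hC'1
  have hC' : ∀ s ∈ Set.Icc (0:ℝ) T, ∀ t ∈ Set.Icc (0:ℝ) T,
      |X t ω - X s ω| ≤ C' * |t - s| ^ (α + ε) := by
    intro s hs t ht
    exact (hC s hs t ht).trans (mul_le_mul_of_nonneg_right (le_max_left _ _)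
      (Real.rpow_nonneg (abs_nonneg _) _))
  set M : ℝ := |X 0 ω| + C' * T ^ (α + ε) with hMdef
  have hM : ∀ t ∈ Set.Icc (0:ℝ) T, |X t ω| ≤ M := by
    intro t ht
    have h0T : (0:ℝ) ∈ Set.Icc (0:ℝ) T := ⟨le_rfl, hT.le⟩
    have h1 := hC' 0 h0T t ht
    have h2 : |t - 0| ^ (α + ε) ≤ T ^ (α + ε) := by
      apply Real.rpow_le_rpow (abs_nonneg _) _ hαε.le
      rw [sub_zero, abs_of_nonneg ht.1]
      exact ht.2
    have h3 : C' * |t - 0| ^ (α + ε) ≤ C' * T ^ (α + ε) :=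
      mul_le_mul_of_nonneg_left h2 hC'0.le
    calc |X t ω| = |X 0 ω + (X t ω - X 0 ω)| := by ring_nf
      _ ≤ |X 0 ω| + |X t ω - X 0 ω| := abs_add_le _ _
      _ ≤ M := by rw [hMdef]; linarith
  obtain ⟨N, hN⟩ := exists_nat_ge (max C' M)
  have hNC : C' ≤ N := le_trans (le_max_left _ _) hN
  have hNM : M ≤ N := le_trans (le_max_right _ _) hN
  have hxN : ∀ t ∈ Set.Icc (0:ℝ) T, |X t ω| ≤ N := fun t ht => (hM t ht).trans hNM
  set IccN : Set ℝ := Set.Icc (-(N:ℝ)) N with hIccN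
  haveI : IsFiniteMeasure (μ.restrict IccN) :=
    ⟨by rw [Measure.restrict_apply_univ]; exact hμfin _ _⟩
  have hN0 : (0:ℝ) ≤ N := le_trans (by positivity) hNC
  constructor
  · -- Part 1: weighted integrability of |f ∘ X|
    have hs_int : ∫⁻ s in Set.Ioo (0:ℝ) T, ENNReal.ofReal (s ^ (-α)) < ⊤ := by
      have h : IntegrableOn (fun s : ℝ => s ^ (-α)) (Set.Ioc (0:ℝ) T) := by
        have h0 := intervalIntegral.intervalIntegrable_rpow' (a := 0) (b := T) (r := -α)
          (by linarith)
        rwa [intervalIntegrable_iff_integrableOn_Ioc_of_le hT.le] at h0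
      exact lt_of_le_of_lt (lintegral_mono_set Ioo_subset_Ioc_self) h.lintegral_lt_top
    set c : ℝ≥0∞ := ENNReal.ofReal |f 0| + μ IccN with hcdef
    have hc : c ≠ ⊤ := (ENNReal.add_lt_top.2 ⟨ENNReal.ofReal_lt_top, hμfin _ _⟩).ne
    calc ∫⁻ s in Set.Ioo (0:ℝ) T, ENNReal.ofReal (|f (X s ω)| * s ^ (-α))
        ≤ ∫⁻ s in Set.Ioo (0:ℝ) T, c * ENNReal.ofReal (s ^ (-α)) := by
          apply setLIntegral_mono (by fun_prop)
          intro s hs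
          rw [ENNReal.ofReal_mul (abs_nonneg _)]
          have hsIcc : s ∈ Set.Icc (0:ℝ) T := ⟨hs.1.le, hs.2.le⟩
          have hXs : |X s ω| ≤ N := hxN s hsIcc
          have h7 : ENNReal.ofReal |f (X s ω)|
              ≤ ENNReal.ofReal |f 0| + ENNReal.ofReal |f (X s ω) - f 0| := by
            rw [← ENNReal.ofReal_add (abs_nonneg _) (abs_nonneg _)]
            apply ENNReal.ofReal_le_ofReal
            calc |f (X s ω)| = |f 0 + (f (X s ω) - f 0)| := by ring_nf
              _ ≤ |f 0| + |f (X s ω) - f 0| := abs_add_le _ _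
          have h8 : ENNReal.ofReal |f (X s ω) - f 0| ≤ μ IccN := by
            rcases le_total (X s ω) 0 with h | h
            · have h9 := hμbound (X s ω) 0 h
              rw [abs_sub_comm]
              refine h9.trans (measure_mono (Icc_subset_Icc ?_ ?_))
              · exact (abs_le.1 hXs).1
              · exact hN0
            · have h9 := hμbound 0 (X s ω) h
              refine h9.trans (measure_mono (Icc_subset_Icc ?_ ?_))
              · linarith
              · exact (abs_le.1 hXs).2
          have h10 : ENNReal.ofReal |f (X s ω)| ≤ c := h7.trans (add_le_add_right h8 _)
          exact mul_le_mul_left h10 _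
      _ = c * ∫⁻ s in Set.Ioo (0:ℝ) T, ENNReal.ofReal (s ^ (-α)) :=
          lintegral_const_mul' _ _ hc
      _ < ⊤ := ENNReal.mul_lt_top hc.lt_top hs_int
  · -- Part 2: the double integral
    set K : ℝ≥0∞ := ENNReal.ofReal (C' ^ γ / α) with hKdef
    have step_t : ∀ t ∈ Set.Ioo (0:ℝ) T,
        (∫⁻ s in Set.Ioo (0:ℝ) t,
          ENNReal.ofReal (|f (X t ω) - f (X s ω)| * (t - s) ^ (-(1 + α))))
        ≤ K * ∫⁻ y in IccN, ENNReal.ofReal |X t ω - y| ^ (-γ) ∂μ := by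
      intro t ht
      have htIcc : t ∈ Set.Icc (0:ℝ) T := ⟨ht.1.le, ht.2.le⟩
      set b : ℝ := X t ω with hbdef
      set G : ℝ → ℝ → ℝ≥0∞ := fun s y =>
        if |y - b| ≤ C' * (t - s) ^ (α + ε) then ENNReal.ofReal ((t - s) ^ (-(1 + α))) else 0
        with hGdef
      have hGm : Measurable (Function.uncurry G) := by
        apply Measurable.ite
        · exact measurableSet_le (by fun_prop) (by fun_prop)
        · fun_prop
        · exact measurable_const
      calc (∫⁻ s in Set.Ioo (0:ℝ) t,
            ENNReal.ofReal (|f (X t ω) - f (X s ω)| * (t - s) ^ (-(1 + α))))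
          ≤ ∫⁻ s in Set.Ioo (0:ℝ) t, ∫⁻ y in IccN, G s y ∂μ := by
            apply setLIntegral_mono (Measurable.lintegral_prod_right hGm)
            intro s hs
            have hst : s < t := hs.2
            have hsIcc : s ∈ Set.Icc (0:ℝ) T := ⟨hs.1.le, hs.2.le.trans ht.2.le⟩
            set a : ℝ := X s ω with hadef
            have haN : |a| ≤ N := hxN s hsIcc
            have hbN : |b| ≤ N := hxN t htIcc
            rw [ENNReal.ofReal_mul (abs_nonneg _)]
            set w : ℝ≥0∞ := ENNReal.ofReal ((t - s) ^ (-(1 + α))) with hwdef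
            set S : Set ℝ := {y : ℝ | |y - b| ≤ C' * (t - s) ^ (α + ε)} with hSdef
            have hSmeas : MeasurableSet S := measurableSet_le (by fun_prop) (by fun_prop)
            have h1 : ENNReal.ofReal |f b - f a| ≤ μ (Set.Icc (a ⊓ b) (a ⊔ b)) := by
              rcases le_total a b with h | h
              · have h0 := hμbound a b h
                rwa [inf_eq_left.2 h, sup_eq_right.2 h]
              · have h0 := hμbound b a h
                rw [abs_sub_comm]
                rwa [inf_eq_right.2 h, sup_eq_left.2 h]
            have hsub : Set.Icc (a ⊓ b) (a ⊔ b) ⊆ S ∩ IccN := by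
              intro y hy
              have hy1 := hy.1
              have hy2 := hy.2
              have hab : a ⊔ b - a ⊓ b = |b - a| := max_sub_min_eq_abs a b
              have hinfb : a ⊓ b ≤ b := inf_le_right
              have hbsup : b ≤ a ⊔ b := le_sup_right
              constructor
              · show |y - b| ≤ C' * (t - s) ^ (α + ε)
                have h5 : |y - b| ≤ |b - a| := by
                  rw [abs_le]
                  constructor <;> linarith
                have h6 : |b - a| ≤ C' * |t - s| ^ (α + ε) := hC' s hsIcc t htIcc
                rw [abs_of_pos (sub_pos.2 hst)] at h6
                exact h5.trans h6
              · constructor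
                · have : -(N:ℝ) ≤ a ⊓ b := le_inf (abs_le.1 haN).1 (abs_le.1 hbN).1
                  linarith
                · have : a ⊔ b ≤ (N:ℝ) := sup_le (abs_le.1 haN).2 (abs_le.1 hbN).2
                  linarith
            have hGeq : (fun y => G s y) = S.indicator (fun _ => w) := by
              funext y
              simp only [hGdef, hSdef, Set.indicator_apply, Set.mem_setOf_eq, hwdef]
            have h2 : ∫⁻ y in IccN, G s y ∂μ = w * μ (S ∩ IccN) := by
              rw [hGeq, lintegral_indicator hSmeas, setLIntegral_const,
                Measure.restrict_apply hSmeas]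
            rw [h2, mul_comm]
            exact mul_le_mul_right (h1.trans (measure_mono hsub)) w
        _ = ∫⁻ y in IccN, (∫⁻ s in Set.Ioo (0:ℝ) t, G s y) ∂μ :=
            lintegral_lintegral_swap hGm.aemeasurable
        _ ≤ ∫⁻ y in IccN, K * ENNReal.ofReal |X t ω - y| ^ (-γ) ∂μ := by
            apply lintegral_mono
            intro y
            show (∫⁻ s in Set.Ioo (0:ℝ) t, G s y) ≤ K * ENNReal.ofReal |X t ω - y| ^ (-γ)
            have h3 := besov_inner_bound hα0 hε0 hC'1 t |y - b| (abs_nonneg _)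
            rw [← hγdef] at h3
            have h4 : |X t ω - y| = |y - b| := by rw [hbdef, abs_sub_comm]
            rw [h4]
            exact h3
        _ = K * ∫⁻ y in IccN, ENNReal.ofReal |X t ω - y| ^ (-γ) ∂μ :=
            lintegral_const_mul' _ _ ENNReal.ofReal_ne_top
    have hφm : Measurable fun t =>
        K * ∫⁻ y in IccN, ENNReal.ofReal |X t ω - y| ^ (-γ) ∂μ := by
      apply Measurable.const_mul
      apply Measurable.lintegral_prod_right (f := fun (t : ℝ) (y : ℝ) =>
        ENNReal.ofReal |X t ω - y| ^ (-γ))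
      have h0 : Measurable fun p : ℝ × ℝ => X p.1 ω := (hXpath ω).comp measurable_fst
      fun_prop
    calc (∫⁻ t in Set.Ioo (0:ℝ) T, ∫⁻ s in Set.Ioo (0:ℝ) t,
          ENNReal.ofReal (|f (X t ω) - f (X s ω)| * (t - s) ^ (-(1 + α))))
        ≤ ∫⁻ t in Set.Ioo (0:ℝ) T,
            K * ∫⁻ y in IccN, ENNReal.ofReal |X t ω - y| ^ (-γ) ∂μ :=
          setLIntegral_mono hφm step_t
      _ = K * ∫⁻ t in Set.Ioo (0:ℝ) T,
            ∫⁻ y in IccN, ENNReal.ofReal |X t ω - y| ^ (-γ) ∂μ :=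
          lintegral_const_mul' _ _ ENNReal.ofReal_ne_top
      _ < ⊤ := ENNReal.mul_lt_top ENNReal.ofReal_lt_top (hZ N)

end
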